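/- For every non-integer β > 1, the lazy map L_β maps J_β = [0, ⌊β⌋/(β-1)] into itself. -/

import Mathlib

open MeasureTheory Set
open scoped Classical

/-- The interval `J_β = [0, ⌊β⌋/(β-1)]`. -/
noncomputable def Jbeta (β : ℝ) : Set ℝ := Set.Icc 0 ((⌊β⌋ : ℝ) / (β - 1))

/-- The greedy digit of `x` in base `β`: equals `j` iff `x ∈ C(j)`, where
`C(j) = [j/β, (j+1)/β)` for `j < ⌊β⌋` and `C(⌊β⌋) = [⌊β⌋/β, ⌊β⌋/(β-1)]`. -/
noncomputable def gdigit (β x : ℝ) : ℤ := min ⌊β * x⌋ ⌊β⌋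

/-- The greedy map `T_β(x) = βx - d` for `x ∈ C(d)`. -/
noncomputable def gmap (β x : ℝ) : ℝ := β * x - gdigit β x

/-- The reflection `ℓ(x) = ⌊β⌋/(β-1) - x`. -/
noncomputable def lref (β x : ℝ) : ℝ := (⌊β⌋ : ℝ) / (β - 1) - x

/-- The lazy digit: the `d` with `x ∈ Δ(d) = ℓ(C(⌊β⌋ - d))`. -/
noncomputable def ldigit (β x : ℝ) : ℤ := ⌊β⌋ - gdigit β (lref β x)

/-- The lazy map `L_β(x) = βx - d` for `x ∈ Δ(d)`. -/
noncomputable def lmap (β x : ℝ) : ℝ := β * x - ldigit β x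

/-- Membership in the union of the switch regions
`S_k = [k/β, ⌊β⌋/(β(β-1)) + (k-1)/β]`, `k = 1, …, ⌊β⌋`. -/
def inSwitch (β x : ℝ) : Prop :=
  ∃ k : ℤ, 1 ≤ k ∧ k ≤ ⌊β⌋ ∧ (k : ℝ) / β ≤ x ∧
    x ≤ (⌊β⌋ : ℝ) / (β * (β - 1)) + ((k : ℝ) - 1) / β

/-- The digit `d_1(ω,x)` assigned by the random map: the greedy digit, unless `x` is
in a switch region and the first coin is `0` (tails), in which case the lazy digit. -/
noncomputable def rdigit (β : ℝ) (ω : ℕ → Bool) (x : ℝ) : ℤ :=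
  if inSwitch β x ∧ ω 0 = false then ldigit β x else gdigit β x

/-- The random β-expansion map `K_β` on `Ω × J_β`, `Ω = {0,1}^ℕ`: the coin sequence is
shifted exactly when `x` lies in a switch region. -/
noncomputable def kmap (β : ℝ) (p : (ℕ → Bool) × ℝ) : (ℕ → Bool) × ℝ :=
  ((if inSwitch β p.2 then (fun n => p.1 (n + 1)) else p.1),
    β * p.2 - rdigit β p.1 p.2)

/-- The digit `d_{n+1}(ω,x) = d_1(K_β^n(ω,x))` of the random β-expansion. -/
noncomputable def rdig (β : ℝ) (n : ℕ) (ω : ℕ → Bool) (x : ℝ) : ℤ :=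
  rdigit β ((kmap β)^[n] (ω, x)).1 ((kmap β)^[n] (ω, x)).2

/-- the lazy map `L_β` maps `J_β` into itself. -/
theorem lazy_maps_into (β : ℝ) (hβ : 1 < β) (hni : ¬ ∃ n : ℤ, β = (n : ℝ)) :
    ∀ x ∈ Jbeta β, lmap β x ∈ Jbeta β := by
  intro x hx
  obtain ⟨hx0, hx1⟩ := hx
  have hb0 : (0:ℝ) < β - 1 := by linarith
  have hF1 : (1:ℤ) ≤ ⌊β⌋ := Int.le_floor.mpr (by exact_mod_cast hβ.le)
  have hF1' : (1:ℝ) ≤ (⌊β⌋:ℤ) := by exact_mod_cast hF1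
  have hFle : (⌊β⌋:ℝ) ≤ β := Int.floor_le β
  have hFgt : β < (⌊β⌋:ℝ) + 1 := Int.lt_floor_add_one β
  set M : ℝ := (⌊β⌋:ℝ) / (β - 1) with hMdef
  have hM1 : 1 ≤ M := by rw [hMdef, le_div_iff₀ hb0]; linarith
  have hβM : β * M = M + (⌊β⌋:ℝ) := by
    rw [hMdef]; field_simp; ring
  set y : ℝ := lref β x with hydef
  have hy0 : 0 ≤ y := by simp only [hydef, lref]; linarith
  have hy1 : y ≤ M := by simp only [hydef, lref]; linarith
  set g : ℤ := gdigit β y with hgdef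
  have hgfl : g ≤ ⌊β * y⌋ := min_le_left _ _
  have ht0 : 0 ≤ β * y - (g:ℝ) := by
    have h1 : ((⌊β * y⌋ : ℤ):ℝ) ≤ β * y := Int.floor_le _
    have h2 : (g:ℝ) ≤ (⌊β * y⌋ : ℝ) := by exact_mod_cast hgfl
    linarith
  have ht1 : β * y - (g:ℝ) ≤ M := by
    rcases le_total (⌊β * y⌋) ⌊β⌋ with h | h
    · have hg : g = ⌊β * y⌋ := min_eq_left h
      have h1 : β * y < (⌊β * y⌋:ℝ) + 1 := Int.lt_floor_add_one _
      rw [hg]; linarith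
    · have hg : g = ⌊β⌋ := min_eq_right h
      have h1 : β * y ≤ β * M := by nlinarith
      rw [hg]; linarith
  have hlx : lmap β x = M - (β * y - (g:ℝ)) := by
    have hxy : x = M - y := by simp [hydef, lref, hMdef]
    simp only [lmap, ldigit, ← hgdef, ← hydef, ← hMdef]
    push_cast
    rw [hxy]
    have h := hβM
    ring_nf at h ⊢
    linarith
  rw [hlx]
  constructor
  · linarith
  · linarith
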